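/- Let ℍ be a hypergraph on [n] and let A, B be distinct acyclic orientations of ℍ with A(H) ≤ B(H) for all H ∈ ℍ. Then there exist vertices i < j and an acyclic orientation A' of ℍ such that A and A' are related by an increasing flip between i and j, A ≠ A', A(H) ≤ A'(H) ≤ B(H) for all H ∈ ℍ. -/

import Mathlib

/-- `ℍ` is a hypergraph on `[n]` (vertices modeled by `Fin n`):
it contains every singleton. -/
def IsHypergraph (n : ℕ) (ℍ : Finset (Finset (Fin n))) : Prop :=
  ∀ i : Fin n, ({i} : Finset (Fin n)) ∈ ℍ

/-- An orientation of `ℍ` assigns to each hyperedge `H ∈ ℍ` a source `A H ∈ H`. -/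
def IsOrientation {n : ℕ} {ℍ : Finset (Finset (Fin n))}
    (A : {H // H ∈ ℍ} → Fin n) : Prop :=
  ∀ H : {H // H ∈ ℍ}, A H ∈ H.1

/-- An orientation `A` is acyclic if there are no hyperedges `H_1, …, H_k ∈ ℍ` with
`k ≥ 2` such that `A (H_{t+1}) ∈ H_t \ {A (H_t)}` for all `t ∈ [k-1]` and
`A (H_1) ∈ H_k \ {A (H_k)}` (indexed from `0` below). -/
def IsAcyclic {n : ℕ} {ℍ : Finset (Finset (Fin n))}
    (A : {H // H ∈ ℍ} → Fin n) : Prop :=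
  ¬ ∃ (k : ℕ) (Hs : ℕ → {H // H ∈ ℍ}), 2 ≤ k ∧
      (∀ t, t + 1 < k → A (Hs (t + 1)) ∈ (Hs t).1 ∧ A (Hs (t + 1)) ≠ A (Hs t)) ∧
      A (Hs 0) ∈ (Hs (k - 1)).1 ∧ A (Hs 0) ≠ A (Hs (k - 1))

/-- The distinct orientations `A ≠ B` of `ℍ` are related by an increasing flip
between `i` and `j` (`i < j`): (a) if `A H ≠ B H` then `A H = i` and `B H = j`, and
(b) if `{i, j} ⊆ H` then `A H = i ↔ B H = j`. -/
def IsFlip {n : ℕ} {ℍ : Finset (Finset (Fin n))}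
    (A B : {H // H ∈ ℍ} → Fin n) (i j : Fin n) : Prop :=
  i < j ∧ A ≠ B ∧ ∀ H : {H // H ∈ ℍ},
    (A H ≠ B H → A H = i ∧ B H = j) ∧
    (i ∈ H.1 → j ∈ H.1 → (A H = i ↔ B H = j))

/-- `[h 0, …, h m]` is a path of length `m` in the orientation `A`:
for each `t < m` there is `H ∈ ℍ` with `A H = h t` and `h (t+1) ∈ H`. -/
def IsPath {n : ℕ} {ℍ : Finset (Finset (Fin n))}
    (A : {H // H ∈ ℍ} → Fin n) (m : ℕ) (h : ℕ → Fin n) : Prop :=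
  ∀ t < m, ∃ H : {H // H ∈ ℍ}, A H = h t ∧ h (t + 1) ∈ H.1



def cfArc {n : ℕ} {ℍ : Finset (Finset (Fin n))} (C : {H // H ∈ ℍ} → Fin n)
    (u v : Fin n) : Prop :=
  u ≠ v ∧ ∃ H : {H // H ∈ ℍ}, C H = u ∧ v ∈ H.1


lemma cf_exists_walk {n : ℕ} {ℍ : Finset (Finset (Fin n))}
    {C : {H // H ∈ ℍ} → Fin n} {u v : Fin n}
    (h : Relation.TransGen (cfArc C) u v) :
    ∃ (k : ℕ) (f : ℕ → Fin n) (Hs : ℕ → {H // H ∈ ℍ}), 1 ≤ k ∧ f 0 = u ∧ f k = v ∧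
      ∀ t < k, C (Hs t) = f t ∧ f (t + 1) ∈ (Hs t).1 ∧ f t ≠ f (t + 1) := by
  induction h with
  | @single b harc =>
      obtain ⟨hne, H, hCH, hv⟩ := harc
      refine ⟨1, fun t => if t = 0 then u else b, fun _ => H, le_refl 1, by simp, by simp, ?_⟩
      intro t ht
      interval_cases t
      simp [hCH, hv, hne]
  | @tail b c hxy harc ih =>
      obtain ⟨hne, H, hCH, hv⟩ := harc
      obtain ⟨k, f, Hs, hk, hf0, hfk, hstep⟩ := ih
      refine ⟨k + 1, fun t => if t ≤ k then f t else c,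
        fun t => if t < k then Hs t else H, by omega, by simp [hf0], by simp, ?_⟩
      intro t ht
      rcases Nat.lt_or_ge t k with htk | htk
      · have h1 : t ≤ k := by omega
        have h2 : t + 1 ≤ k := by omega
        simpa [htk, h1, h2] using hstep t htk
      · have htk' : t = k := by omega
        subst htk'
        have h1 : ¬ t + 1 ≤ t := by omega
        simp [h1, hfk, hCH, hv, hne]

lemma cf_not_loop {n : ℕ} {ℍ : Finset (Finset (Fin n))}
    {C : {H // H ∈ ℍ} → Fin n} (hC : IsAcyclic C) (v : Fin n) :
    ¬ Relation.TransGen (cfArc C) v v := by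
  intro h
  obtain ⟨k, f, Hs, hk, hf0, hfk, hstep⟩ := cf_exists_walk h
  rcases Nat.lt_or_ge k 2 with hk2 | hk2
  · have hk1 : k = 1 := by omega
    subst hk1
    exact (hstep 0 (by omega)).2.2 (by rw [hf0, hfk])
  · apply hC
    refine ⟨k, Hs, hk2, ?_, ?_, ?_⟩
    · intro t ht
      have h1 := hstep t (by omega)
      have h2 := hstep (t + 1) ht
      refine ⟨?_, ?_⟩
      · rw [h2.1]; exact h1.2.1
      · rw [h2.1, h1.1]; exact h1.2.2.symm
    · have h1 := hstep (k - 1) (by omega)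
      have h2 := hstep 0 (by omega)
      have hkk : k - 1 + 1 = k := by omega
      rw [h2.1, hf0, ← hfk, ← hkk]
      exact h1.2.1
    · have h1 := hstep (k - 1) (by omega)
      have h2 := hstep 0 (by omega)
      have hkk : k - 1 + 1 = k := by omega
      rw [h2.1, hf0, ← hfk, h1.1]
      rw [← hkk]
      exact h1.2.2.symm

lemma cf_acyclic_of_not_loop {n : ℕ} {ℍ : Finset (Finset (Fin n))}
    {C : {H // H ∈ ℍ} → Fin n} (h : ∀ v, ¬ Relation.TransGen (cfArc C) v v) :
    IsAcyclic C := by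
  rintro ⟨k, Hs, hk, hstep, hw1, hw2⟩
  have key : ∀ t, t ≤ k - 1 → Relation.ReflTransGen (cfArc C) (C (Hs 0)) (C (Hs t)) := by
    intro t
    induction t with
    | zero => intro _; exact Relation.ReflTransGen.refl
    | succ t ih =>
        intro ht
        have h1 : t + 1 < k := by omega
        exact (ih (by omega)).tail ⟨(hstep t h1).2.symm, Hs t, rfl, (hstep t h1).1⟩
  have last : cfArc C (C (Hs (k - 1))) (C (Hs 0)) := ⟨hw2.symm, Hs (k - 1), rfl, hw1⟩
  exact h _ (Relation.TransGen.tail' (key (k - 1) le_rfl) last)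

def cfOarc {n : ℕ} {ℍ : Finset (Finset (Fin n))} (A : {H // H ∈ ℍ} → Fin n)
    (i j : Fin n) (u v : Fin n) : Prop :=
  u ≠ v ∧ ∃ H : {H // H ∈ ℍ}, ¬ (A H = i ∧ j ∈ H.1) ∧ A H = u ∧ v ∈ H.1

noncomputable def cfFlip {n : ℕ} {ℍ : Finset (Finset (Fin n))} (A : {H // H ∈ ℍ} → Fin n)
    (i j : Fin n) : {H // H ∈ ℍ} → Fin n :=
  fun H => if A H = i ∧ j ∈ H.1 then j else A H

lemma cf_oarc_arc {n : ℕ} {ℍ : Finset (Finset (Fin n))} {A : {H // H ∈ ℍ} → Fin n}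
    {i j u v : Fin n} (h : cfOarc A i j u v) : cfArc A u v := by
  obtain ⟨hne, H, _, h1, h2⟩ := h
  exact ⟨hne, H, h1, h2⟩

lemma cf_oarc_flip {n : ℕ} {ℍ : Finset (Finset (Fin n))} {A : {H // H ∈ ℍ} → Fin n}
    {i j u v : Fin n} (h : cfOarc A i j u v) : cfArc (cfFlip A i j) u v := by
  obtain ⟨hne, H, hS, h1, h2⟩ := h
  exact ⟨hne, H, by simp only [cfFlip, if_neg hS]; exact h1, h2⟩

lemma cf_arc_flip_cases {n : ℕ} {ℍ : Finset (Finset (Fin n))} {A : {H // H ∈ ℍ} → Fin n}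
    {i j u v : Fin n} (h : cfArc (cfFlip A i j) u v) :
    cfOarc A i j u v ∨
      (u = j ∧ ∃ H : {H // H ∈ ℍ}, (A H = i ∧ j ∈ H.1) ∧ v ∈ H.1 ∧ v ≠ j) := by
  obtain ⟨hne, H, hH, hv⟩ := h
  by_cases hS : A H = i ∧ j ∈ H.1
  · right
    have huj : u = j := by rw [← hH]; simp only [cfFlip, if_pos hS]
    exact ⟨huj, H, hS, hv, fun hvj => hne (huj.trans hvj.symm)⟩
  · left
    exact ⟨hne, H, hS, by simpa only [cfFlip, if_neg hS] using hH, hv⟩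

lemma cf_flip_chain_j {n : ℕ} {ℍ : Finset (Finset (Fin n))} {A : {H // H ∈ ℍ} → Fin n}
    {i j x y : Fin n} (h : Relation.TransGen (cfArc (cfFlip A i j)) x y) :
    Relation.TransGen (cfOarc A i j) x y ∨
      (Relation.ReflTransGen (cfArc (cfFlip A i j)) x j ∧
        Relation.TransGen (cfArc (cfFlip A i j)) j y) := by
  induction h with
  | @single b harc =>
      rcases cf_arc_flip_cases harc with ho | ⟨hx, _⟩
      · exact Or.inl (Relation.TransGen.single ho)
      · subst hx
        exact Or.inr ⟨Relation.ReflTransGen.refl, Relation.TransGen.single harc⟩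
  | @tail b c hxy harc ih =>
      rcases cf_arc_flip_cases harc with ho | ⟨hyj, _⟩
      · rcases ih with h1 | ⟨h1, h2⟩
        · exact Or.inl (h1.tail ho)
        · exact Or.inr ⟨h1, h2.tail harc⟩
      · subst hyj
        rcases ih with h1 | ⟨h1, h2⟩
        · exact Or.inr ⟨(Relation.TransGen.mono (fun a b hh => cf_oarc_flip hh) _ _ h1).to_reflTransGen,
            Relation.TransGen.single harc⟩
        · exact Or.inr ⟨h1, h2.tail harc⟩

lemma cf_flip_chain_S {n : ℕ} {ℍ : Finset (Finset (Fin n))} {A : {H // H ∈ ℍ} → Fin n}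
    {i j x y : Fin n} (h : Relation.TransGen (cfArc (cfFlip A i j)) x y) :
    Relation.TransGen (cfOarc A i j) x y ∨
      ∃ (w : Fin n) (H : {H // H ∈ ℍ}), (A H = i ∧ j ∈ H.1) ∧ w ∈ H.1 ∧ w ≠ j ∧
        Relation.ReflTransGen (cfOarc A i j) w y := by
  induction h with
  | @single b harc =>
      rcases cf_arc_flip_cases harc with ho | ⟨hx, H, hS, hv, hvj⟩
      · exact Or.inl (Relation.TransGen.single ho)
      · exact Or.inr ⟨b, H, hS, hv, hvj, Relation.ReflTransGen.refl⟩
  | @tail b c hxy harc ih =>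
      rcases cf_arc_flip_cases harc with ho | ⟨hyj, H, hS, hv, hvj⟩
      · rcases ih with h1 | ⟨w, H, hS, hw, hwj, hpath⟩
        · exact Or.inl (h1.tail ho)
        · exact Or.inr ⟨w, H, hS, hw, hwj, hpath.tail ho⟩
      · exact Or.inr ⟨c, H, hS, hv, hvj, Relation.ReflTransGen.refl⟩

/-- Let `A ≠ B` be distinct acyclic orientations with `A H ≤ B H` for all `H ∈ ℍ`.
Then there exist vertices `i < j` and an acyclic orientation `A'` related to `A`
by an increasing flip between `i` and `j`, with `A ≠ A'` and
`A H ≤ A' H ≤ B H` for all `H ∈ ℍ`. -/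
theorem exists_coherent_flip_between
    (n : ℕ) (hn : 1 ≤ n) (ℍ : Finset (Finset (Fin n))) (hℍ : IsHypergraph n ℍ)
    (A B : {H // H ∈ ℍ} → Fin n)
    (hAor : IsOrientation A) (hBor : IsOrientation B)
    (hAac : IsAcyclic A) (hBac : IsAcyclic B)
    (hAB : A ≠ B) (hle : ∀ H : {H // H ∈ ℍ}, A H ≤ B H) :
    ∃ (i j : Fin n) (A' : {H // H ∈ ℍ} → Fin n), i < j ∧
      IsOrientation A' ∧ IsAcyclic A' ∧ IsFlip A A' i j ∧ A ≠ A' ∧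
      ∀ H : {H // H ∈ ℍ}, A H ≤ A' H ∧ A' H ≤ B H := by
  classical
  obtain ⟨H₀', hH₀'⟩ : ∃ H : {H // H ∈ ℍ}, A H ≠ B H := by
    by_contra hcon
    push_neg at hcon
    exact hAB (funext hcon)
  have nlA : ∀ v, ¬ Relation.TransGen (cfArc A) v v := cf_not_loop hAac
  have nlB : ∀ v, ¬ Relation.TransGen (cfArc B) v v := cf_not_loop hBac
  -- choose j minimal for B-reachability among B-values of disagreement edges
  have wfB : WellFounded (fun a b : Fin n => Relation.TransGen (cfArc B) a b) := by
    haveI : IsTrans (Fin n) (fun a b : Fin n => Relation.TransGen (cfArc B) a b) :=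
      ⟨fun a b c hab hbc => hab.trans hbc⟩
    haveI : IsIrrefl (Fin n) (fun a b : Fin n => Relation.TransGen (cfArc B) a b) := ⟨nlB⟩
    exact Finite.wellFounded_of_trans_of_irrefl _
  obtain ⟨j, hjJ, hjmin⟩ := wfB.has_min {v : Fin n | ∃ H, A H ≠ B H ∧ B H = v}
    ⟨B H₀', H₀', hH₀', rfl⟩
  -- choose i maximal for A-reachability among A-values of edges flipping to j
  have wfA : WellFounded (fun a b : Fin n => Relation.TransGen (cfArc A) b a) := by
    haveI : IsTrans (Fin n) (fun a b : Fin n => Relation.TransGen (cfArc A) b a) :=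
      ⟨fun a b c hab hbc => hbc.trans hab⟩
    haveI : IsIrrefl (Fin n) (fun a b : Fin n => Relation.TransGen (cfArc A) b a) := ⟨nlA⟩
    exact Finite.wellFounded_of_trans_of_irrefl _
  obtain ⟨i, hiT, himax⟩ := wfA.has_min {w : Fin n | ∃ H, A H ≠ B H ∧ B H = j ∧ A H = w}
    (by obtain ⟨H, h1, h2⟩ := hjJ; exact ⟨A H, H, h1, h2, rfl⟩)
  obtain ⟨H₀, hD₀, hB₀, hA₀⟩ := hiT
  have hij : i < j := by
    rw [← hA₀, ← hB₀]
    exact lt_of_le_of_ne (hle H₀) hD₀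
  have hjH₀ : j ∈ H₀.1 := hB₀ ▸ hBor H₀
  have hiH₀ : i ∈ H₀.1 := hA₀ ▸ hAor H₀
  have arcAij : cfArc A i j := ⟨hij.ne, H₀, hA₀, hjH₀⟩
  have arcBji : cfArc B j i := ⟨hij.ne', H₀, hB₀, hiH₀⟩
  -- every flipped edge has B-value exactly j
  have hSB : ∀ H : {H // H ∈ ℍ}, A H = i → j ∈ H.1 → B H = j := by
    intro H hAH hjH
    by_cases hD : A H = B H
    · exfalso
      have hBH : B H = i := hD.symm.trans hAH
      exact nlB i (Relation.TransGen.head ⟨hij.ne, H, hBH, hjH⟩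
        (Relation.TransGen.single arcBji))
    · by_contra hBj
      exact hjmin (B H) ⟨H, hD, rfl⟩ (Relation.TransGen.single ⟨hBj, H, rfl, hjH⟩)
  have hA'S : ∀ H : {H // H ∈ ℍ}, A H = i → j ∈ H.1 → cfFlip A i j H = j := by
    intro H h1 h2
    simp only [cfFlip, if_pos (And.intro h1 h2)]
  have hA'nS : ∀ H : {H // H ∈ ℍ}, ¬ (A H = i ∧ j ∈ H.1) → cfFlip A i j H = A H := by
    intro H hS
    simp only [cfFlip, if_neg hS]
  -- orientation
  have hor : IsOrientation (cfFlip A i j) := by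
    intro H
    by_cases hS : A H = i ∧ j ∈ H.1
    · rw [hA'S H hS.1 hS.2]; exact hS.2
    · rw [hA'nS H hS]; exact hAor H
  -- bounds
  have hbounds : ∀ H : {H // H ∈ ℍ}, A H ≤ cfFlip A i j H ∧ cfFlip A i j H ≤ B H := by
    intro H
    by_cases hS : A H = i ∧ j ∈ H.1
    · constructor
      · rw [hA'S H hS.1 hS.2, hS.1]; exact hij.le
      · rw [hA'S H hS.1 hS.2, hSB H hS.1 hS.2]
    · rw [hA'nS H hS]
      exact ⟨le_refl _, hle H⟩
  have hAA' : A ≠ cfFlip A i j := by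
    intro hcon
    have h1 := hA'S H₀ hA₀ hjH₀
    rw [← hcon] at h1
    exact hij.ne (hA₀.symm.trans h1)
  -- flip property
  have hflip : IsFlip A (cfFlip A i j) i j := by
    refine ⟨hij, hAA', fun H => ⟨?_, ?_⟩⟩
    · intro hne
      by_cases hS : A H = i ∧ j ∈ H.1
      · exact ⟨hS.1, hA'S H hS.1 hS.2⟩
      · exact absurd (hA'nS H hS).symm hne
    · intro hiH hjH
      constructor
      · intro hAH
        exact hA'S H hAH hjH
      · intro hA'j
        by_cases hS : A H = i ∧ j ∈ H.1
        · exact hS.1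
        · exfalso
          have hAHj : A H = j := (hA'nS H hS).symm.trans hA'j
          exact nlA i (Relation.TransGen.head arcAij
            (Relation.TransGen.single ⟨hij.ne', H, hAHj, hiH⟩))
  -- acyclicity
  have hacy : IsAcyclic (cfFlip A i j) := by
    apply cf_acyclic_of_not_loop
    intro x hx
    have loopj : Relation.TransGen (cfArc (cfFlip A i j)) j j := by
      rcases cf_flip_chain_j hx with h1 | ⟨h1, h2⟩
      · exact absurd (Relation.TransGen.mono (fun a b hh => cf_oarc_arc hh) _ _ h1) (nlA x)
      · exact h2.trans_left h1
    rcases cf_flip_chain_S loopj with h1 | ⟨w, E, hSE, hwE, hwj, hpath⟩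
    · exact nlA j (Relation.TransGen.mono (fun a b hh => cf_oarc_arc hh) _ _ h1)
    · have claim : ∀ v : Fin n, Relation.ReflTransGen (cfOarc A i j) v j →
          Relation.ReflTransGen (cfArc B) v j ∨
            ∃ w', w' ≠ i ∧ (∃ G : {H // H ∈ ℍ}, A G ≠ B G ∧ B G = j ∧ A G = w') ∧
              Relation.ReflTransGen (cfOarc A i j) v w' := by
        intro v hv
        induction hv using Relation.ReflTransGen.head_induction_on with
        | refl => exact Or.inl Relation.ReflTransGen.refl
        | @head a c step rest ih =>
            obtain ⟨hne, G, hGnS, hAG, huG⟩ := step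
            by_cases hD : A G = B G
            · rcases ih with hl | ⟨w', h1, h2, h3⟩
              · exact Or.inl (hl.head ⟨hne, G, hD.symm.trans hAG, huG⟩)
              · exact Or.inr ⟨w', h1, h2, h3.head ⟨hne, G, hGnS, hAG, huG⟩⟩
            · by_cases hBj : B G = j
              · refine Or.inr ⟨a, ?_, ⟨G, hD, hBj, hAG⟩, Relation.ReflTransGen.refl⟩
                intro hai
                exact hGnS ⟨hAG.trans hai, hBj ▸ hBor G⟩
              · rcases ih with hl | ⟨w', h1, h2, h3⟩
                · exfalso
                  have hBGJ : ∃ H : {H // H ∈ ℍ}, A H ≠ B H ∧ B H = B G := ⟨G, hD, rfl⟩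
                  by_cases hub : c = B G
                  · rw [hub] at hl
                    rcases Relation.reflTransGen_iff_eq_or_transGen.mp hl with he | ht
                    · exact hBj he.symm
                    · exact hjmin (B G) hBGJ ht
                  · exact hjmin (B G) hBGJ (Relation.TransGen.head'
                      ⟨Ne.symm hub, G, rfl, huG⟩ hl)
                · exact Or.inr ⟨w', h1, h2, h3.head ⟨hne, G, hGnS, hAG, huG⟩⟩
      rcases claim w hpath with hl | ⟨w', hw'i, hw'T, hp⟩
      · have hBE : B E = j := hSB E hSE.1 hSE.2
        exact nlB j (Relation.TransGen.head' ⟨Ne.symm hwj, E, hBE, hwE⟩ hl)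
      · have hiw : Relation.TransGen (cfArc A) i w' := by
          by_cases hwi : w = i
          · rw [hwi] at hp
            rcases Relation.reflTransGen_iff_eq_or_transGen.mp
              (Relation.ReflTransGen.mono (fun a b hh => cf_oarc_arc hh) _ _ hp) with he | ht
            · exact absurd he hw'i
            · exact ht
          · exact Relation.TransGen.head' ⟨fun hh => hwi hh.symm, E, hSE.1, hwE⟩
              (Relation.ReflTransGen.mono (fun a b hh => cf_oarc_arc hh) _ _ hp)
        exact himax w' hw'T hiw
  exact ⟨i, j, cfFlip A i j, hij, hor, hacy, hflip, hAA', hbounds⟩
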